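/- Fix D ≥ 2, a sign σ ∈ {1,−1}, and real numbers Λ, χ_B, χ. Consider the real vector space with basis {J_{ab} = −J_{ba}}, {B_a}, {P_a}, {H}, {J*_{ab} = −J*_{ba}}, {P*_a} (indices in {1,…,D}) and nonzero brackets: [J_{ab},J_{cd}] = δ_{bc}J_{ad} + δ_{ad}J_{bc} − δ_{bd}J_{ac} − δ_{ac}J_{bd}, the same pattern for [J_{ab},J*_{cd}] with J* in place of J on the right, [J_{ab},X_c] = δ_{cb}X_a − δ_{ca}X_b for X ∈ {B, P, P*}, [B_a,P_b] = δ_{ab}H, [P_a,H] = −σΛ²B_a, [P_a,P_b] = σΛ²J_{ab}, [P_a,P*_b] = −J*_{ab}, [P_a,J*_{bc}] = −σΛ²(δ_{ab}P*_c − δ_{ac}P*_b), [B_a,B_b] = −χ_B J*_{ab}, [B_a,H] = σΛ²χ_B P*_a (the extended (A)dS-Carroll algebra in D+1 dimensions). Then this bracket satisfies the Jacobi identity; the symmetric bilinear form determined by B(B_a,B_b) = χ_Bδ_{ab}, B(H,H) = −σΛ²χ_B, B(J_{ab},J*_{cd}) = δ_{ac}δ_{bd} − δ_{ad}δ_{bc},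 B(P_a,P*_b) = δ_{ab}, B(J_{ab},J_{cd}) = χ(δ_{ac}δ_{bd} − δ_{ad}δ_{bc}), B(P_a,P_b) = −σχΛ²δ_{ab}, with all other basis pairings zero, is invariant; and this form is nondegenerate if and only if Λ²χ_B ≠ 0. -/

import Mathlib

/-- The Kronecker delta. -/
def kron {D : ℕ} (a b : Fin D) : ℝ := if a = b then 1 else 0

theorem kron_comm {D : ℕ} (a b : Fin D) : kron a b = kron b a := by
  simp [kron, eq_comm]

/-- The basis family of the extended (A)dS-Carroll algebra in `D+1` dimensions: the rotations
`J_{ab}` (`a < b`), boosts `B_a`, spatial translations `P_a`, time translation `H`, and the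
extension generators `J*_{ab}` (`a < b`) and `P*_a`. -/
def adsCarExtFam {D : ℕ} {V : Type*} (J : Fin D → Fin D → V) (B P : Fin D → V) (H : V)
    (Js : Fin D → Fin D → V) (Ps : Fin D → V) :
    ({p : Fin D × Fin D // p.1 < p.2} ⊕ (Fin D ⊕ (Fin D ⊕ (Unit ⊕
      ({p : Fin D × Fin D // p.1 < p.2} ⊕ Fin D))))) → V
  | Sum.inl p => J p.1.1 p.1.2
  | Sum.inr (Sum.inl a) => B a
  | Sum.inr (Sum.inr (Sum.inl a)) => P a
  | Sum.inr (Sum.inr (Sum.inr (Sum.inl _))) => H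
  | Sum.inr (Sum.inr (Sum.inr (Sum.inr (Sum.inl p)))) => Js p.1.1 p.1.2
  | Sum.inr (Sum.inr (Sum.inr (Sum.inr (Sum.inr a)))) => Ps a

set_option maxHeartbeats 4000000 in
/-- The extended (A)dS-Carroll algebra in `D+1` dimensions: its bracket
satisfies the Jacobi identity, the indicated symmetric bilinear form is invariant, and it is
nondegenerate iff `Λ²χ_B ≠ 0`. -/
theorem extended_ads_carroll_algebra
    (D : ℕ) (hD : 2 ≤ D) (σ : ℝ) (hσ : σ = 1 ∨ σ = -1) (Λ χB χ : ℝ)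
    (V : Type*) [AddCommGroup V] [Module ℝ V]
    (J Js : Fin D → Fin D → V) (B P Ps : Fin D → V) (H : V)
    (hJanti : ∀ a b, J a b = - J b a)
    (hJsanti : ∀ a b, Js a b = - Js b a)
    (hindep : LinearIndependent ℝ (adsCarExtFam J B P H Js Ps))
    (hspan : Submodule.span ℝ (Set.range (adsCarExtFam J B P H Js Ps)) = ⊤)
    (br : V →ₗ[ℝ] V →ₗ[ℝ] V)
    (hbr_anti : ∀ x y : V, br x y = - br y x)
    (hJJ : ∀ a b c d, br (J a b) (J c d) =
      kron b c • J a d + kron a d • J b c - kron b d • J a c - kron a c • J b d)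
    (hJJs : ∀ a b c d, br (J a b) (Js c d) =
      kron b c • Js a d + kron a d • Js b c - kron b d • Js a c - kron a c • Js b d)
    (hJB : ∀ a b c, br (J a b) (B c) = kron c b • B a - kron c a • B b)
    (hJP : ∀ a b c, br (J a b) (P c) = kron c b • P a - kron c a • P b)
    (hJPs : ∀ a b c, br (J a b) (Ps c) = kron c b • Ps a - kron c a • Ps b)
    (hBP : ∀ a b, br (B a) (P b) = kron a b • H)
    (hPH : ∀ a, br (P a) H = (-(σ * Λ ^ 2)) • B a)
    (hPP : ∀ a b, br (P a) (P b) = (σ * Λ ^ 2) • J a b)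
    (hPPs : ∀ a b, br (P a) (Ps b) = - Js a b)
    (hPJs : ∀ a b c, br (P a) (Js b c) =
      (-(σ * Λ ^ 2)) • (kron a b • Ps c - kron a c • Ps b))
    (hBB : ∀ a b, br (B a) (B b) = (-χB) • Js a b)
    (hBH : ∀ a, br (B a) H = (σ * Λ ^ 2 * χB) • Ps a)
    (hJH : ∀ a b, br (J a b) H = 0)
    (hBJs : ∀ a b c, br (B a) (Js b c) = 0)
    (hHJs : ∀ a b, br H (Js a b) = 0)
    (hJsJs : ∀ a b c d, br (Js a b) (Js c d) = 0)
    (hJsPs : ∀ a b c, br (Js a b) (Ps c) = 0)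
    (hBPs : ∀ a b, br (B a) (Ps b) = 0)
    (hHPs : ∀ a, br H (Ps a) = 0)
    (hPsPs : ∀ a b, br (Ps a) (Ps b) = 0)
    (Bil : V →ₗ[ℝ] V →ₗ[ℝ] ℝ)
    (hsymm : ∀ x y : V, Bil x y = Bil y x)
    (hBBF : ∀ a b, Bil (B a) (B b) = χB * kron a b)
    (hHHF : Bil H H = -(σ * Λ ^ 2 * χB))
    (hJJsF : ∀ a b c d, Bil (J a b) (Js c d) = kron a c * kron b d - kron a d * kron b c)
    (hPPsF : ∀ a b, Bil (P a) (Ps b) = kron a b)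
    (hJJF : ∀ a b c d, Bil (J a b) (J c d) = χ * (kron a c * kron b d - kron a d * kron b c))
    (hPPF : ∀ a b, Bil (P a) (P b) = -(σ * χ * Λ ^ 2) * kron a b)
    (hJBF : ∀ a b c, Bil (J a b) (B c) = 0)
    (hJPF : ∀ a b c, Bil (J a b) (P c) = 0)
    (hJHF : ∀ a b, Bil (J a b) H = 0)
    (hJPsF : ∀ a b c, Bil (J a b) (Ps c) = 0)
    (hBPF : ∀ a b, Bil (B a) (P b) = 0)
    (hBHF : ∀ a, Bil (B a) H = 0)
    (hBJsF : ∀ a b c, Bil (B a) (Js b c) = 0)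
    (hBPsF : ∀ a b, Bil (B a) (Ps b) = 0)
    (hPHF : ∀ a, Bil (P a) H = 0)
    (hPJsF : ∀ a b c, Bil (P a) (Js b c) = 0)
    (hHJsF : ∀ a b, Bil H (Js a b) = 0)
    (hHPsF : ∀ a, Bil H (Ps a) = 0)
    (hJsJsF : ∀ a b c d, Bil (Js a b) (Js c d) = 0)
    (hJsPsF : ∀ a b c, Bil (Js a b) (Ps c) = 0)
    (hPsPsF : ∀ a b, Bil (Ps a) (Ps b) = 0) :
    (∀ x y z : V, br x (br y z) + br y (br z x) + br z (br x y) = 0) ∧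
    (∀ x y z : V, Bil (br z x) y + Bil x (br z y) = 0) ∧
    ((∀ x : V, (∀ y : V, Bil x y = 0) → x = 0) ↔ Λ ^ 2 * χB ≠ 0) := by
  classical
  set F := adsCarExtFam J B P H Js Ps with hF
  have hσ0 : σ ≠ 0 := by rcases hσ with h | h <;> rw [h] <;> norm_num
  have hxx : ∀ x : V, br x x = 0 := by
    intro x
    have h := hbr_anti x x
    have h2 : (2 : ℝ) • br x x = 0 := by
      rw [two_smul]; nth_rewrite 1 [h]; abel
    rcases smul_eq_zero.mp h2 with h3 | h3
    · norm_num at h3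
    · exact h3
  have hHH : br H H = 0 := hxx H
  obtain ⟨g, hg⟩ : ∃ g : Fin D → Fin D → V, ∀ a b, J a b = g a b - g b a :=
    ⟨fun a b => (2⁻¹ : ℝ) • J a b, fun a b => by dsimp only; rw [hJanti b a]; module⟩
  obtain ⟨gs, hgs⟩ : ∃ gs : Fin D → Fin D → V, ∀ a b, Js a b = gs a b - gs b a :=
    ⟨fun a b => (2⁻¹ : ℝ) • Js a b, fun a b => by dsimp only; rw [hJsanti b a]; module⟩
  -- flipped bracket table
  have hJsJ : ∀ c d a b, br (Js c d) (J a b)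
      = -(kron b c • Js a d + kron a d • Js b c - kron b d • Js a c - kron a c • Js b d) := by
    intro c d a b; rw [hbr_anti, hJJs]
  have hBJ : ∀ c a b, br (B c) (J a b) = -(kron c b • B a - kron c a • B b) := by
    intro c a b; rw [hbr_anti, hJB]
  have hPJ : ∀ c a b, br (P c) (J a b) = -(kron c b • P a - kron c a • P b) := by
    intro c a b; rw [hbr_anti, hJP]
  have hPsJ : ∀ c a b, br (Ps c) (J a b) = -(kron c b • Ps a - kron c a • Ps b) := by
    intro c a b; rw [hbr_anti, hJPs]
  have hPB : ∀ b a, br (P b) (B a) = -(kron a b • H) := by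
    intro b a; rw [hbr_anti, hBP]
  have hHP : ∀ a, br H (P a) = -((-(σ * Λ ^ 2)) • B a) := by
    intro a; rw [hbr_anti, hPH]
  have hHB : ∀ a, br H (B a) = -((σ * Λ ^ 2 * χB) • Ps a) := by
    intro a; rw [hbr_anti, hBH]
  have hHJ : ∀ a b, br H (J a b) = 0 := by
    intro a b; rw [hbr_anti, hJH, neg_zero]
  have hPsP : ∀ b a, br (Ps b) (P a) = -(-Js a b) := by
    intro b a; rw [hbr_anti, hPPs]
  have hJsP : ∀ b c a, br (Js b c) (P a)
      = -((-(σ * Λ ^ 2)) • (kron a b • Ps c - kron a c • Ps b)) := by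
    intro b c a; rw [hbr_anti, hPJs]
  have hJsB : ∀ b c a, br (Js b c) (B a) = 0 := by
    intro b c a; rw [hbr_anti, hBJs, neg_zero]
  have hJsH : ∀ a b, br (Js a b) H = 0 := by
    intro a b; rw [hbr_anti, hHJs, neg_zero]
  have hPsJs : ∀ c a b, br (Ps c) (Js a b) = 0 := by
    intro c a b; rw [hbr_anti, hJsPs, neg_zero]
  have hPsB : ∀ b a, br (Ps b) (B a) = 0 := by
    intro b a; rw [hbr_anti, hBPs, neg_zero]
  have hPsH : ∀ a, br (Ps a) H = 0 := by
    intro a; rw [hbr_anti, hHPs, neg_zero]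
  -- flipped bilinear form table
  have fBJ : ∀ c a b, Bil (B c) (J a b) = 0 := fun c a b => (hsymm _ _).trans (hJBF a b c)
  have fPJ : ∀ c a b, Bil (P c) (J a b) = 0 := fun c a b => (hsymm _ _).trans (hJPF a b c)
  have fHJ : ∀ a b, Bil H (J a b) = 0 := fun a b => (hsymm _ _).trans (hJHF a b)
  have fJsJ : ∀ c d a b, Bil (Js c d) (J a b) = kron a c * kron b d - kron a d * kron b c :=
    fun c d a b => (hsymm _ _).trans (hJJsF a b c d)
  have fPsJ : ∀ c a b, Bil (Ps c) (J a b) = 0 := fun c a b => (hsymm _ _).trans (hJPsF a b c)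
  have fPB : ∀ b a, Bil (P b) (B a) = 0 := fun b a => (hsymm _ _).trans (hBPF a b)
  have fHB : ∀ a, Bil H (B a) = 0 := fun a => (hsymm _ _).trans (hBHF a)
  have fJsB : ∀ b c a, Bil (Js b c) (B a) = 0 := fun b c a => (hsymm _ _).trans (hBJsF a b c)
  have fPsB : ∀ b a, Bil (Ps b) (B a) = 0 := fun b a => (hsymm _ _).trans (hBPsF a b)
  have fHP : ∀ a, Bil H (P a) = 0 := fun a => (hsymm _ _).trans (hPHF a)
  have fJsP : ∀ b c a, Bil (Js b c) (P a) = 0 := fun b c a => (hsymm _ _).trans (hPJsF a b c)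
  have fPsP : ∀ b a, Bil (Ps b) (P a) = kron a b := fun b a => (hsymm _ _).trans (hPPsF a b)
  have fJsH : ∀ a b, Bil (Js a b) H = 0 := fun a b => (hsymm _ _).trans (hHJsF a b)
  have fPsH : ∀ a, Bil (Ps a) H = 0 := fun a => (hsymm _ _).trans (hHPsF a)
  have fPsJs : ∀ c a b, Bil (Ps c) (Js a b) = 0 := fun c a b => (hsymm _ _).trans (hJsPsF a b c)
  -- Part 1: Jacobi on basis elements
  have jac0 : ∀ i j k, br (F i) (br (F j) (F k)) + br (F j) (br (F k) (F i))
      + br (F k) (br (F i) (F j)) = 0 := by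
    rintro (⟨⟨a1, b1⟩, -⟩ | a1 | a1 | - | ⟨⟨a1, b1⟩, -⟩ | a1) (⟨⟨a2, b2⟩, -⟩ | a2 | a2 | - | ⟨⟨a2, b2⟩, -⟩ | a2) (⟨⟨a3, b3⟩, -⟩ | a3 | a3 | - | ⟨⟨a3, b3⟩, -⟩ | a3) <;>
      simp only [hF, adsCarExtFam] <;>
      simp only [hJJ, hJJs, hJB, hJP, hJPs, hBP, hPH, hPP, hPPs, hPJs, hBB, hBH, hJH,
        hBJs, hHJs, hJsJs, hJsPs, hBPs, hHPs, hPsPs, hHH, hJsJ, hBJ, hPJ, hPsJ, hPB,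
        hHP, hHB, hHJ, hPsP, hJsP, hJsB, hJsH, hPsJs, hPsB, hPsH,
        map_add, map_sub, map_smul, map_neg, map_zero, smul_add, smul_sub, smul_neg,
        smul_zero, smul_smul, neg_neg, neg_zero, add_zero, zero_add, sub_zero] <;>
      (try simp only [hg, hgs]) <;>
      (try (match_scalars <;> ((try simp only [kron_comm]); ring1)))
  have step1 : ∀ i j (zz : V), br (F i) (br (F j) zz) + br (F j) (br zz (F i))
      + br zz (br (F i) (F j)) = 0 := by
    intro i j
    have h0 : ((br (F i)) ∘ₗ (br (F j)) + (br (F j)) ∘ₗ (br.flip (F i))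
        + br.flip (br (F i) (F j))) = (0 : V →ₗ[ℝ] V) :=
      LinearMap.ext_on hspan (by rintro _ ⟨k, rfl⟩; simpa using jac0 i j k)
    intro zz
    simpa using LinearMap.congr_fun h0 zz
  have step2 : ∀ i (yy zz : V), br (F i) (br yy zz) + br yy (br zz (F i))
      + br zz (br (F i) yy) = 0 := by
    intro i
    have h0 : ∀ zz : V, ((br (F i)) ∘ₗ (br.flip zz) + br.flip (br zz (F i))
        + (br zz) ∘ₗ (br (F i))) = (0 : V →ₗ[ℝ] V) := fun zz =>
      LinearMap.ext_on hspan (by rintro _ ⟨j, rfl⟩; simpa using step1 i j zz)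
    intro yy zz
    simpa using LinearMap.congr_fun (h0 zz) yy
  have part1 : ∀ x y z : V, br x (br y z) + br y (br z x) + br z (br x y) = 0 := by
    intro x y z
    have h0 : (br.flip (br y z) + (br y) ∘ₗ (br z) + (br z) ∘ₗ (br.flip y))
        = (0 : V →ₗ[ℝ] V) :=
      LinearMap.ext_on hspan (by rintro _ ⟨i, rfl⟩; simpa using step2 i y z)
    simpa using LinearMap.congr_fun h0 x
  -- Part 2: invariance on basis elements
  have inv0 : ∀ k i j, Bil (br (F k) (F i)) (F j) + Bil (F i) (br (F k) (F j)) = 0 := by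
    rintro (⟨⟨a1, b1⟩, -⟩ | a1 | a1 | - | ⟨⟨a1, b1⟩, -⟩ | a1) (⟨⟨a2, b2⟩, -⟩ | a2 | a2 | - | ⟨⟨a2, b2⟩, -⟩ | a2) (⟨⟨a3, b3⟩, -⟩ | a3 | a3 | - | ⟨⟨a3, b3⟩, -⟩ | a3) <;>
      simp only [hF, adsCarExtFam] <;>
      simp only [hJJ, hJJs, hJB, hJP, hJPs, hBP, hPH, hPP, hPPs, hPJs, hBB, hBH, hJH,
        hBJs, hHJs, hJsJs, hJsPs, hBPs, hHPs, hPsPs, hHH, hJsJ, hBJ, hPJ, hPsJ, hPB,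
        hHP, hHB, hHJ, hPsP, hJsP, hJsB, hJsH, hPsJs, hPsB, hPsH,
        map_add, map_sub, map_smul, map_neg, map_zero, smul_add, smul_sub, smul_neg,
        smul_zero, smul_smul, neg_neg, neg_zero, add_zero, zero_add, sub_zero,
        LinearMap.add_apply, LinearMap.sub_apply, LinearMap.smul_apply,
        LinearMap.neg_apply, LinearMap.zero_apply,
        hBBF, hHHF, hJJsF, hPPsF, hJJF, hPPF, hJBF, hJPF, hJHF, hJPsF, hBPF, hBHF,
        hBJsF, hBPsF, hPHF, hPJsF, hHJsF, hHPsF, hJsJsF, hJsPsF, hPsPsF,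
        fBJ, fPJ, fHJ, fJsJ, fPsJ, fPB, fHB, fJsB, fPsB, fHP, fJsP, fPsP, fJsH,
        fPsH, fPsJs, smul_eq_mul] <;>
      (try ((try simp only [kron_comm]); ring1))
  have stepA : ∀ k i (yy : V), Bil (br (F k) (F i)) yy + Bil (F i) (br (F k) yy) = 0 := by
    intro k i
    have h0 : (Bil (br (F k) (F i)) + (Bil (F i)) ∘ₗ (br (F k))) = (0 : V →ₗ[ℝ] ℝ) :=
      LinearMap.ext_on hspan (by rintro _ ⟨j, rfl⟩; simpa using inv0 k i j)
    intro yy; simpa using LinearMap.congr_fun h0 yy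
  have stepB : ∀ k (xx yy : V), Bil (br (F k) xx) yy + Bil xx (br (F k) yy) = 0 := by
    intro k
    have h0 : ∀ yy : V, ((Bil.flip yy) ∘ₗ (br (F k)) + Bil.flip (br (F k) yy))
        = (0 : V →ₗ[ℝ] ℝ) := fun yy =>
      LinearMap.ext_on hspan (by rintro _ ⟨i, rfl⟩; simpa using stepA k i yy)
    intro xx yy; simpa using LinearMap.congr_fun (h0 yy) xx
  have part2 : ∀ x y z : V, Bil (br z x) y + Bil x (br z y) = 0 := by
    intro x y z
    have h0 : ((Bil.flip y) ∘ₗ (br.flip x) + (Bil x) ∘ₗ (br.flip y)) = (0 : V →ₗ[ℝ] ℝ) :=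
      LinearMap.ext_on hspan (by rintro _ ⟨k, rfl⟩; simpa using stepB k x y)
    simpa using LinearMap.congr_fun h0 z
  -- Part 3: nondegeneracy
  obtain ⟨b0, hb0⟩ : ∃ b : Module.Basis ({p : Fin D × Fin D // p.1 < p.2} ⊕ (Fin D ⊕ (Fin D ⊕
      (Unit ⊕ ({p : Fin D × Fin D // p.1 < p.2} ⊕ Fin D))))) ℝ V, ∀ i, b i = F i :=
    ⟨Module.Basis.mk hindep hspan.ge, fun i => Module.Basis.mk_apply _ _ i⟩
  refine ⟨part1, part2, ?_, ?_⟩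
  · -- nondegenerate → Λ ^ 2 * χB ≠ 0
    intro hnd hzero
    rcases mul_eq_zero.mp hzero with hL | hC
    · have hz : Bil H = 0 :=
        LinearMap.ext_on hspan (by
          rintro _ ⟨i, rfl⟩
          rcases i with (⟨⟨a, b⟩, -⟩ | a | a | - | ⟨⟨a, b⟩, -⟩ | a) <;>
            simp [hF, adsCarExtFam, fHJ, fHB, fHP, hHHF, hHJsF, hHPsF, hL])
      have hH0 : H = 0 := hnd H (fun y => by rw [hz]; rfl)
      exact hindep.ne_zero (Sum.inr (Sum.inr (Sum.inr (Sum.inl ()))))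
        (by rw [hF] at *; simpa [adsCarExtFam] using hH0)
    · have a0 : Fin D := ⟨0, by omega⟩
      have hz : Bil (B a0) = 0 :=
        LinearMap.ext_on hspan (by
          rintro _ ⟨i, rfl⟩
          rcases i with (⟨⟨a, b⟩, -⟩ | a | a | - | ⟨⟨a, b⟩, -⟩ | a) <;>
            simp [hF, adsCarExtFam, fBJ, hBBF, hBPF, hBHF, hBJsF, hBPsF, hC])
      have hB0 : B a0 = 0 := hnd (B a0) (fun y => by rw [hz]; rfl)
      exact hindep.ne_zero (Sum.inr (Sum.inl a0))
        (by rw [hF] at *; simpa [adsCarExtFam] using hB0)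
  · -- Λ ^ 2 * χB ≠ 0 → nondegenerate
    intro hne x hx
    have hΛ : Λ ^ 2 ≠ 0 := fun h => hne (by rw [h, zero_mul])
    have hχB : χB ≠ 0 := fun h => hne (by rw [h, mul_zero])
    have hΛ0 : Λ ≠ 0 := fun h => hΛ (by rw [h]; ring)
    set c := b0.repr x with hc
    have key : ∀ v : V, (∑ i, c i * Bil (F i) v) = 0 := by
      intro v
      have hsum := b0.sum_repr x
      calc (∑ i, c i * Bil (F i) v) = Bil x v := by
            conv_rhs => rw [← hsum]
            simp [map_sum, LinearMap.sum_apply, map_smul, LinearMap.smul_apply,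
              smul_eq_mul, hb0, ← hc]
        _ = 0 := hx v
    have eP : ∀ a : Fin D, c (Sum.inr (Sum.inr (Sum.inl a))) = 0 := by
      intro a
      simpa [Fintype.sum_sum_type, hF, adsCarExtFam, hJPsF, hBPsF, hPPsF, hHPsF,
        hJsPsF, hPsPsF, kron, mul_ite, Finset.univ_unique, Finset.sum_singleton,
        Finset.sum_ite_eq, Finset.sum_ite_eq'] using key (Ps a)
    have ePs : ∀ a : Fin D, c (Sum.inr (Sum.inr (Sum.inr (Sum.inr (Sum.inr a))))) = 0 := by
      intro a
      simpa [Fintype.sum_sum_type, hF, adsCarExtFam, hJPF, hBPF, hPPF, fHP, fJsP,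
        fPsP, kron, mul_ite, Finset.univ_unique, Finset.sum_singleton,
        Finset.sum_ite_eq, Finset.sum_ite_eq', eP] using key (P a)
    have eB : ∀ a : Fin D, c (Sum.inr (Sum.inl a)) = 0 := by
      intro a
      have h := key (B a)
      simp [Fintype.sum_sum_type, hF, adsCarExtFam, hJBF, hBBF, fPB, fHB, fJsB,
        fPsB, kron, mul_ite, Finset.univ_unique, Finset.sum_singleton,
        Finset.sum_ite_eq, Finset.sum_ite_eq'] at h
      simpa [mul_eq_zero, hχB] using h
    have eH : c (Sum.inr (Sum.inr (Sum.inr (Sum.inl ())))) = 0 := by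
      have h := key H
      simp [Fintype.sum_sum_type, hF, adsCarExtFam, hJHF, hBHF, hPHF, hHHF, fJsH,
        fPsH, Finset.univ_unique, Finset.sum_singleton] at h
      simpa [mul_eq_zero, neg_eq_zero, hσ0, hΛ, hΛ0, hχB, pow_eq_zero_iff] using h
    have eJ : ∀ p : {p : Fin D × Fin D // p.1 < p.2}, c (Sum.inl p) = 0 := by
      intro p
      have h := key (Js p.1.1 p.1.2)
      simp only [Fintype.sum_sum_type, hF, adsCarExtFam, hJJsF, hBJsF, hPJsF, hHJsF,
        hJsJsF, fPsJs, mul_zero, Finset.sum_const_zero, add_zero, zero_add,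
        Finset.univ_unique, Finset.sum_singleton] at h
      rw [Finset.sum_eq_single p] at h
      · simpa [kron, p.2.ne, p.2.ne'] using h
      · intro q _ hq
        rcases eq_or_ne q.1.1 p.1.1 with h1 | h1
        · rcases eq_or_ne q.1.2 p.1.2 with h2 | h2
          · exact absurd (Subtype.ext (Prod.ext h1 h2)) hq
          · have h3 : q.1.1 ≠ p.1.2 := by rw [h1]; exact p.2.ne
            simp [kron, h2, h3]
        · rcases eq_or_ne q.1.2 p.1.1 with h2 | h2
          · have h3 : q.1.1 ≠ p.1.2 := by
              intro hh
              have l1 : q.1.1 < p.1.1 := h2 ▸ q.2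
              have l2 : p.1.1 < q.1.1 := hh ▸ p.2
              exact absurd (l1.trans l2) (lt_irrefl _)
            simp [kron, h1, h3]
          · simp [kron, h1, h2]
      · intro hnp; exact absurd (Finset.mem_univ p) hnp
    have eJs : ∀ p : {p : Fin D × Fin D // p.1 < p.2},
        c (Sum.inr (Sum.inr (Sum.inr (Sum.inr (Sum.inl p))))) = 0 := by
      intro p
      have h := key (J p.1.1 p.1.2)
      simp only [Fintype.sum_sum_type, hF, adsCarExtFam, hJJF, fBJ, fPJ, fHJ, fJsJ,
        fPsJ, mul_zero, Finset.sum_const_zero, add_zero, zero_add,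
        Finset.univ_unique, Finset.sum_singleton, eJ, zero_mul] at h
      rw [Finset.sum_eq_single p] at h
      · simpa [kron, p.2.ne, p.2.ne'] using h
      · intro q _ hq
        rcases eq_or_ne p.1.1 q.1.1 with h1 | h1
        · rcases eq_or_ne p.1.2 q.1.2 with h2 | h2
          · exact absurd (Subtype.ext (Prod.ext h1.symm h2.symm)) hq
          · have h3 : p.1.1 ≠ q.1.2 := by rw [h1]; exact q.2.ne
            simp [kron, h2, h3]
        · rcases eq_or_ne p.1.2 q.1.1 with h2 | h2
          · have h3 : p.1.1 ≠ q.1.2 := ne_of_lt ((h2 ▸ p.2).trans q.2)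
            simp [kron, h1, h3]
          · simp [kron, h1, h2]
      · intro hnp; exact absurd (Finset.mem_univ p) hnp
    have hall : ∀ i, c i = 0 := by
      rintro (p | a | a | ⟨⟩ | p | a)
      · exact eJ p
      · exact eB a
      · exact eP a
      · exact eH
      · exact eJs p
      · exact ePs a
    calc x = ∑ i, c i • b0 i := (b0.sum_repr x).symm
      _ = 0 := Finset.sum_eq_zero fun i _ => by rw [hall i, zero_smul]
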